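/- Let z ≥ 1 and even m ≥ 4 be integers such that z is even, and let G be the complete 3-partite graph with two parts of size z/2 and one part of size z(m-1)/2. Then the Laplacian spectrum of G is {0 with multiplicity 1, z with multiplicity z(m-1)/2 - 1, zm/2 with multiplicity z - 2, z(m+1)/2 with multiplicity 2}, and the Laplacian energy of G equals z^2(m-1)(m-2)/(m+1) + 2z. -/

import Mathlib

open Polynomial Matrix

/-- Real adjacency matrix of the complete 3-partite graph with two parts of size `t`
(indexed by `Fin 2 × Fin t`) and one part of size `w` (indexed by `Fin w`):
two vertices are adjacent iff they lie in different parts. -/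
def tripartiteAdjR (t w : ℕ) :
    Matrix ((Fin 2 × Fin t) ⊕ Fin w) ((Fin 2 × Fin t) ⊕ Fin w) ℝ :=
  fun u v =>
    match u, v with
    | Sum.inl x, Sum.inl y => if x.1 ≠ y.1 then 1 else 0
    | Sum.inl _, Sum.inr _ => 1
    | Sum.inr _, Sum.inl _ => 1
    | Sum.inr _, Sum.inr _ => 0

/-- Degree matrix of the above graph: a vertex in a small part has degree `t + w`,
a vertex in the big part has degree `2 t`. -/
def tripartiteDegR (t w : ℕ) :
    Matrix ((Fin 2 × Fin t) ⊕ Fin w) ((Fin 2 × Fin t) ⊕ Fin w) ℝ :=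
  Matrix.diagonal fun u =>
    match u with
    | Sum.inl _ => (t : ℝ) + w
    | Sum.inr _ => 2 * t

abbrev TI (t w : ℕ) := (Fin 2 × Fin t) ⊕ Fin w

def smInd (t w : ℕ) (i : Fin 2) : TI t w → ℝ
  | Sum.inl x => if x.1 = i then 1 else 0
  | Sum.inr _ => 0

def bigInd (t w : ℕ) : TI t w → ℝ
  | Sum.inl _ => 0
  | Sum.inr _ => 1

def Umat (t w : ℕ) [NeZero t] [NeZero w] : Matrix (TI t w) (TI t w) ℝ := fun r c =>
  match c with
  | Sum.inl x =>
    if x.2 = 0 then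
      (if x.1 = 0 then smInd t w 0 r - smInd t w 1 r
       else (w : ℝ) * (smInd t w 0 r + smInd t w 1 r) - 2 * t * bigInd t w r)
    else (if r = Sum.inl (x.1, 0) then 1 else 0) - (if r = Sum.inl x then 1 else 0)
  | Sum.inr k =>
    if k = 0 then 1
    else (if r = Sum.inr 0 then 1 else 0) - (if r = Sum.inr k then 1 else 0)

noncomputable def Vmat (t w : ℕ) [NeZero t] [NeZero w] : Matrix (TI t w) (TI t w) ℝ := fun r c =>
  match r with
  | Sum.inl x =>
    if x.2 = 0 then
      (if x.1 = 0 then (smInd t w 0 c - smInd t w 1 c) / (2 * t)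
       else (smInd t w 0 c + smInd t w 1 c) / (2 * t * (2 * t + w)) -
         bigInd t w c / (w * (2 * t + w)))
    else smInd t w x.1 c / t - (if c = Sum.inl x then 1 else 0)
  | Sum.inr k =>
    if k = 0 then 1 / (2 * t + w)
    else bigInd t w c / w - (if c = Sum.inr k then 1 else 0)





lemma finEqComm {n : ℕ} (a b : Fin n) : (a = b) ↔ (b = a) := eq_comm

set_option maxHeartbeats 3200000 in
lemma VU (t w : ℕ) [NeZero t] [NeZero w] : Vmat t w * Umat t w = 1 := by
  have ht : (t:ℝ) ≠ 0 := Nat.cast_ne_zero.2 (NeZero.ne t)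
  have hw : (w:ℝ) ≠ 0 := Nat.cast_ne_zero.2 (NeZero.ne w)
  have hN : (2*(t:ℝ)+w) ≠ 0 := by positivity
  ext r c
  rw [Matrix.mul_apply, Fintype.sum_sum_type]
  simp only [Fintype.sum_prod_type, Fin.sum_univ_two]
  rcases r with ⟨ri, rj⟩ | rk <;> rcases c with ⟨ci, cj⟩ | ck
  · fin_cases ri <;> fin_cases ci <;> by_cases hrj : rj = 0 <;> by_cases hcj : cj = 0
    all_goals try simp [Umat, Vmat, smInd, bigInd, Matrix.one_apply, -Prod.mk_zero_zero,
      Finset.sum_ite_eq, Finset.sum_ite_eq', Finset.sum_sub_distrib, sub_mul, mul_sub,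
      Finset.mul_sum, Finset.sum_div, finEqComm]
    all_goals try (split_ifs <;> (try simp_all [Fin.ext_iff, Prod.ext_iff, -Fin.val_eq_zero_iff]) <;>
      (try field_simp) <;> (try ring))
    all_goals try field_simp
    all_goals try ring
  · fin_cases ri <;> by_cases hrj : rj = 0 <;> by_cases hck : ck = 0
    all_goals try simp [Umat, Vmat, smInd, bigInd, Matrix.one_apply, -Prod.mk_zero_zero,
      Finset.sum_ite_eq, Finset.sum_ite_eq', Finset.sum_sub_distrib, sub_mul, mul_sub,
      Finset.mul_sum, Finset.sum_div, finEqComm]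
    all_goals try (split_ifs <;> (try simp_all [Fin.ext_iff, Prod.ext_iff, -Fin.val_eq_zero_iff]) <;>
      (try field_simp) <;> (try ring))
    all_goals try field_simp
    all_goals try ring
  · fin_cases ci <;> by_cases hrk : rk = 0 <;> by_cases hcj : cj = 0
    all_goals try simp [Umat, Vmat, smInd, bigInd, Matrix.one_apply, -Prod.mk_zero_zero,
      Finset.sum_ite_eq, Finset.sum_ite_eq', Finset.sum_sub_distrib, sub_mul, mul_sub,
      Finset.mul_sum, Finset.sum_div, finEqComm]
    all_goals try (split_ifs <;> (try simp_all [Fin.ext_iff, Prod.ext_iff, -Fin.val_eq_zero_iff]) <;>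
      (try field_simp) <;> (try ring))
    all_goals try field_simp
    all_goals try ring
  · by_cases hrk : rk = 0 <;> by_cases hck : ck = 0
    all_goals try simp [Umat, Vmat, smInd, bigInd, Matrix.one_apply, -Prod.mk_zero_zero,
      Finset.sum_ite_eq, Finset.sum_ite_eq', Finset.sum_sub_distrib, sub_mul, mul_sub,
      Finset.mul_sum, Finset.sum_div, finEqComm]
    all_goals try (split_ifs <;> (try simp_all [Fin.ext_iff, Prod.ext_iff, -Fin.val_eq_zero_iff]) <;>
      (try field_simp) <;> (try ring))
    all_goals try field_simp
    all_goals try ring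

def dFun (t w : ℕ) [NeZero t] [NeZero w] : TI t w → ℝ
  | Sum.inl x => if x.2 = 0 then 2 * t + w else t + w
  | Sum.inr k => if k = 0 then 0 else 2 * t

def Dmat (t w : ℕ) [NeZero t] [NeZero w] : Matrix (TI t w) (TI t w) ℝ :=
  Matrix.diagonal (dFun t w)

set_option maxHeartbeats 3200000 in
lemma LU (t w : ℕ) [NeZero t] [NeZero w] :
    (tripartiteDegR t w - tripartiteAdjR t w) * Umat t w = Umat t w * Dmat t w := by
  ext r c
  rw [Matrix.mul_apply, Matrix.mul_apply, Fintype.sum_sum_type, Fintype.sum_sum_type]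
  simp only [Fintype.sum_prod_type, Fin.sum_univ_two]
  rcases r with ⟨ri, rj⟩ | rk <;> rcases c with ⟨ci, cj⟩ | ck
  · fin_cases ri <;> fin_cases ci <;> by_cases hrj : rj = 0 <;> by_cases hcj : cj = 0
    all_goals try simp [Umat, Dmat, dFun, tripartiteAdjR, tripartiteDegR, smInd, bigInd,
      Matrix.diagonal_apply, Matrix.of_apply, Matrix.sub_apply, -Prod.mk_zero_zero,
      Finset.sum_ite_eq, Finset.sum_ite_eq', Finset.sum_sub_distrib, sub_mul, mul_sub,
      Finset.mul_sum, Finset.sum_div, finEqComm]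
    all_goals try (split_ifs <;> (try simp_all [Fin.ext_iff, Prod.ext_iff, -Fin.val_eq_zero_iff]) <;>
      (try field_simp) <;> (try ring))
    all_goals try field_simp
    all_goals try ring
  · fin_cases ri <;> by_cases hrj : rj = 0 <;> by_cases hck : ck = 0
    all_goals try simp [Umat, Dmat, dFun, tripartiteAdjR, tripartiteDegR, smInd, bigInd,
      Matrix.diagonal_apply, Matrix.of_apply, Matrix.sub_apply, -Prod.mk_zero_zero,
      Finset.sum_ite_eq, Finset.sum_ite_eq', Finset.sum_sub_distrib, sub_mul, mul_sub,
      Finset.mul_sum, Finset.sum_div, finEqComm]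
    all_goals try (split_ifs <;> (try simp_all [Fin.ext_iff, Prod.ext_iff, -Fin.val_eq_zero_iff]) <;>
      (try field_simp) <;> (try ring))
    all_goals try field_simp
    all_goals try ring
  · fin_cases ci <;> by_cases hrk : rk = 0 <;> by_cases hcj : cj = 0
    all_goals try simp [Umat, Dmat, dFun, tripartiteAdjR, tripartiteDegR, smInd, bigInd,
      Matrix.diagonal_apply, Matrix.of_apply, Matrix.sub_apply, -Prod.mk_zero_zero,
      Finset.sum_ite_eq, Finset.sum_ite_eq', Finset.sum_sub_distrib, sub_mul, mul_sub,
      Finset.mul_sum, Finset.sum_div, finEqComm]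
    all_goals try (split_ifs <;> (try simp_all [Fin.ext_iff, Prod.ext_iff, -Fin.val_eq_zero_iff]) <;>
      (try field_simp) <;> (try ring))
    all_goals try field_simp
    all_goals try ring
  · by_cases hrk : rk = 0 <;> by_cases hck : ck = 0
    all_goals try simp [Umat, Dmat, dFun, tripartiteAdjR, tripartiteDegR, smInd, bigInd,
      Matrix.diagonal_apply, Matrix.of_apply, Matrix.sub_apply, -Prod.mk_zero_zero,
      Finset.sum_ite_eq, Finset.sum_ite_eq', Finset.sum_sub_distrib, sub_mul, mul_sub,
      Finset.mul_sum, Finset.sum_div, finEqComm]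
    all_goals try (split_ifs <;> (try simp_all [Fin.ext_iff, Prod.ext_iff, -Fin.val_eq_zero_iff]) <;>
      (try field_simp) <;> (try ring))
    all_goals try field_simp
    all_goals try ring

lemma charpoly_conj {n : Type*} [Fintype n] [DecidableEq n] (U V M : Matrix n n ℝ)
    (hUV : U * V = 1) : (U * M * V).charpoly = M.charpoly := by
  set f : Matrix n n ℝ →+* Matrix n n ℝ[X] := (Polynomial.C : ℝ →+* ℝ[X]).mapMatrix with hf
  have h1 : f U * f V = 1 := by rw [← _root_.map_mul, hUV, _root_.map_one]
  have key : charmatrix (U * M * V) = f U * charmatrix M * f V := by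
    unfold charmatrix
    rw [hf]
    rw [_root_.map_mul, _root_.map_mul, Matrix.mul_sub, Matrix.sub_mul]
    congr 1
    calc Matrix.scalar n (X : ℝ[X])
        = Matrix.scalar n (X : ℝ[X]) * ((Polynomial.C : ℝ →+* ℝ[X]).mapMatrix U *
            (Polynomial.C : ℝ →+* ℝ[X]).mapMatrix V) := by
          rw [show ((Polynomial.C : ℝ →+* ℝ[X]).mapMatrix U *
            (Polynomial.C : ℝ →+* ℝ[X]).mapMatrix V) = 1 from h1, mul_one]
      _ = _ := by
          rw [← mul_assoc,
            (Matrix.scalar_commute (X : ℝ[X]) (fun r' => Commute.all X r') _).eq, mul_assoc]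
  unfold Matrix.charpoly
  rw [key, Matrix.det_mul, Matrix.det_mul, mul_right_comm, ← Matrix.det_mul, h1,
    Matrix.det_one, one_mul]

lemma roots_charpoly_diagonal {n : Type*} [Fintype n] [DecidableEq n] (d : n → ℝ) :
    (Matrix.diagonal d).charpoly.roots = Finset.univ.val.map d := by
  have hc : charmatrix (Matrix.diagonal d) = Matrix.diagonal (fun i => X - C (d i)) := by
    ext i j
    by_cases h : i = j
    · subst h; simp
    · simp [charmatrix_apply_ne _ _ _ h, Matrix.diagonal_apply_ne _ h]
  unfold Matrix.charpoly
  rw [hc, Matrix.det_diagonal, Finset.prod_eq_multiset_prod]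
  have h2 := roots_multiset_prod_X_sub_C (Multiset.map d Finset.univ.val)
  rw [Multiset.map_map] at h2
  exact h2

lemma card_filter_snd_eq (t : ℕ) [NeZero t] :
    (Finset.filter (fun x : Fin 2 × Fin t => x.2 = 0) Finset.univ).card = 2 := by
  rw [Finset.card_filter, Fintype.sum_prod_type, Fin.sum_univ_two]
  simp

lemma map_dFun (t w : ℕ) [NeZero t] [NeZero w] :
    Finset.univ.val.map (dFun t w) =
      Multiset.replicate 2 (2*(t:ℝ)+w) + Multiset.replicate (2*t-2) ((t:ℝ)+w) +
      (Multiset.replicate 1 (0:ℝ) + Multiset.replicate (w-1) (2*(t:ℝ))) := by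
  have htpos : 1 ≤ t := Nat.one_le_iff_ne_zero.2 (NeZero.ne t)
  have hwpos : 1 ≤ w := Nat.one_le_iff_ne_zero.2 (NeZero.ne w)
  rw [← Finset.univ_disjSum_univ, Finset.val_disjSum, Multiset.disjSum, Multiset.map_add,
    Multiset.map_map, Multiset.map_map]
  have hcard1 : (Finset.filter (fun x : Fin 2 × Fin t => x.2 = 0) Finset.univ).card = 2 := by
    exact card_filter_snd_eq t
  have hcardt : (Finset.filter (fun x : Fin 2 × Fin t => ¬ x.2 = 0) Finset.univ).card = 2*t - 2 := by
    have := Finset.card_filter_add_card_filter_not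
      (s := (Finset.univ : Finset (Fin 2 × Fin t))) (p := fun x => x.2 = 0)
    rw [hcard1] at this
    simp only [Finset.card_univ, Fintype.card_prod, Fintype.card_fin] at this
    omega
  have hcardw1 : (Finset.filter (fun k : Fin w => k = 0) Finset.univ).card = 1 := by
    simp [Finset.filter_eq']
  have hcardw : (Finset.filter (fun k : Fin w => ¬ k = 0) Finset.univ).card = w - 1 := by
    have := Finset.card_filter_add_card_filter_not
      (s := (Finset.univ : Finset (Fin w))) (p := fun k => k = 0)
    rw [hcardw1] at this
    simp only [Finset.card_univ, Fintype.card_fin] at this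
    omega
  congr 1
  · rw [← Multiset.filter_add_not (fun x : Fin 2 × Fin t => x.2 = 0) Finset.univ.val,
      Multiset.map_add]
    congr 1
    · rw [Multiset.eq_replicate]
      refine ⟨by rw [Multiset.card_map, ← Finset.filter_val]; exact hcard1, ?_⟩
      intro b hb
      obtain ⟨x, hx, rfl⟩ := Multiset.mem_map.1 hb
      have hx2 := (Multiset.mem_filter.1 hx).2
      simp [dFun, hx2]
    · rw [Multiset.eq_replicate]
      refine ⟨by rw [Multiset.card_map, ← Finset.filter_val]; exact hcardt, ?_⟩
      intro b hb
      obtain ⟨x, hx, rfl⟩ := Multiset.mem_map.1 hb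
      have hx2 := (Multiset.mem_filter.1 hx).2
      simp [dFun, hx2]
  · rw [← Multiset.filter_add_not (fun k : Fin w => k = 0) Finset.univ.val,
      Multiset.map_add]
    congr 1
    · rw [Multiset.eq_replicate]
      refine ⟨by rw [Multiset.card_map, ← Finset.filter_val]; exact hcardw1, ?_⟩
      intro b hb
      obtain ⟨x, hx, rfl⟩ := Multiset.mem_map.1 hb
      have hx2 := (Multiset.mem_filter.1 hx).2
      simp [dFun, hx2]
    · rw [Multiset.eq_replicate]
      refine ⟨by rw [Multiset.card_map, ← Finset.filter_val]; exact hcardw, ?_⟩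
      intro b hb
      obtain ⟨x, hx, rfl⟩ := Multiset.mem_map.1 hb
      have hx2 := (Multiset.mem_filter.1 hx).2
      simp [dFun, hx2]

set_option maxHeartbeats 1600000 in
theorem stmt_18 (m z t w : ℕ) (hm : 4 ≤ m) (hme : Even m) (hz : 1 ≤ z)
    (ht : z = 2 * t) (hw : 2 * w = z * (m - 1)) :
    (tripartiteDegR t w - tripartiteAdjR t w).charpoly.roots =
      Multiset.replicate 1 (0 : ℝ) +
        Multiset.replicate (z * (m - 1) / 2 - 1) ((z : ℝ)) +
        Multiset.replicate (z - 2) ((z : ℝ) * m / 2) +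
        Multiset.replicate 2 ((z : ℝ) * (m + 1) / 2) ∧
    (((tripartiteDegR t w - tripartiteAdjR t w).charpoly.roots.map
        fun β => |β - (z : ℝ) * (2 * m - 1) / (m + 1)|).sum
      = (z : ℝ) ^ 2 * ((m : ℝ) - 1) * ((m : ℝ) - 2) / ((m : ℝ) + 1) + 2 * z) := by
  have htpos : 1 ≤ t := by omega
  have hwpos : 2 ≤ w := by
    have h3 : 3 ≤ m - 1 := by omega
    have := Nat.mul_le_mul hz h3
    omega
  haveI : NeZero t := ⟨by omega⟩
  haveI : NeZero w := ⟨by omega⟩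
  have hm4 : (4:ℝ) ≤ (m:ℝ) := by exact_mod_cast hm
  have ht1 : (1:ℝ) ≤ (t:ℝ) := by exact_mod_cast htpos
  have hzr : (z:ℝ) = 2*(t:ℝ) := by exact_mod_cast ht
  have hw' : ((2*w : ℕ):ℝ) = ((z*(m-1) : ℕ):ℝ) := by rw [hw]
  have hwr : (w:ℝ) = (t:ℝ)*((m:ℝ)-1) := by
    push_cast [Nat.cast_sub (by omega : 1 ≤ m)] at hw'
    linear_combination hw'/2 + hzr*((m:ℝ)-1)/2
  set L := tripartiteDegR t w - tripartiteAdjR t w with hLdef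
  have hUV : Umat t w * Vmat t w = 1 := mul_eq_one_comm.mp (VU t w)
  have hL : L = Umat t w * Dmat t w * Vmat t w := by
    calc L = L * (Umat t w * Vmat t w) := by rw [hUV, mul_one]
    _ = (L * Umat t w) * Vmat t w := by rw [mul_assoc]
    _ = (Umat t w * Dmat t w) * Vmat t w := by rw [LU]
  have hcp : L.charpoly = (Dmat t w).charpoly := by rw [hL]; exact charpoly_conj _ _ _ hUV
  have hroots0 : L.charpoly.roots =
      Multiset.replicate 2 (2*(t:ℝ)+w) + Multiset.replicate (2*t-2) ((t:ℝ)+w) +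
      (Multiset.replicate 1 (0:ℝ) + Multiset.replicate (w-1) (2*(t:ℝ))) := by
    rw [hcp, show Dmat t w = Matrix.diagonal (dFun t w) from rfl,
      roots_charpoly_diagonal, map_dFun]
  have n1 : z*(m-1)/2 - 1 = w - 1 := by rw [← hw]; omega
  have n2 : z - 2 = 2*t - 2 := by omega
  have e2 : (z:ℝ)*(m:ℝ)/2 = (t:ℝ)+(w:ℝ) := by rw [hzr, hwr]; ring
  have e3 : (z:ℝ)*((m:ℝ)+1)/2 = 2*(t:ℝ)+(w:ℝ) := by rw [hzr, hwr]; ring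
  have hroots : L.charpoly.roots =
      Multiset.replicate 1 (0 : ℝ) +
        Multiset.replicate (z * (m - 1) / 2 - 1) ((z : ℝ)) +
        Multiset.replicate (z - 2) ((z : ℝ) * m / 2) +
        Multiset.replicate 2 ((z : ℝ) * (m + 1) / 2) := by
    rw [hroots0, n1, n2, e3, e2, hzr]
    abel
  refine ⟨hroots, ?_⟩
  rw [hroots]
  simp only [Multiset.map_add, Multiset.map_replicate, Multiset.sum_add,
    Multiset.sum_replicate, nsmul_eq_mul]
  have hm1 : (0:ℝ) < (m:ℝ)+1 := by linarith
  have hzpos : (0:ℝ) ≤ (z:ℝ) := by positivity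
  set cst : ℝ := (z:ℝ) * (2 * (m:ℝ) - 1) / ((m:ℝ) + 1) with hcst
  have habs0 : |(0:ℝ) - cst| = cst := by
    rw [zero_sub, abs_neg, abs_of_nonneg]
    rw [hcst]
    apply div_nonneg _ (le_of_lt hm1)
    nlinarith
  have hle1 : (z:ℝ) ≤ cst := by
    rw [hcst, le_div_iff₀ hm1]
    nlinarith
  have habs1 : |(z:ℝ) - cst| = cst - (z:ℝ) := by
    rw [abs_of_nonpos (by linarith), neg_sub]
  have hle2 : cst ≤ (z:ℝ)*(m:ℝ)/2 := by
    rw [hcst, div_le_iff₀ hm1]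
    nlinarith
  have habs2 : |(z:ℝ)*(m:ℝ)/2 - cst| = (z:ℝ)*(m:ℝ)/2 - cst :=
    abs_of_nonneg (by linarith)
  have hle3 : cst ≤ (z:ℝ)*((m:ℝ)+1)/2 := by
    rw [hcst, div_le_iff₀ hm1]
    nlinarith
  have habs3 : |(z:ℝ)*((m:ℝ)+1)/2 - cst| = (z:ℝ)*((m:ℝ)+1)/2 - cst :=
    abs_of_nonneg (by linarith)
  push_cast [n1, n2, Nat.cast_sub (by omega : 1 ≤ w), Nat.cast_sub (by omega : 2 ≤ 2*t)]
  rw [habs0, habs1, habs2, habs3]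
  rw [hcst, hzr, hwr]
  field_simp
  ring
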